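/- Let m ≥ 1, Δ₀ > 0, k_ξ > 0, r > 0, υ_max > 0, U > 0, and let Λ be an m×m real symmetric positive definite matrix with smallest eigenvalue λ_min and largest eigenvalue λ_max. Define sat : ℝᵐ → ℝᵐ by sat(x) = (tanh(‖x‖)/‖x‖)·x for x ≠ 0 and sat(0) = 0. Then for every σ ∈ ℝᵐ and x, y, z ∈ ℝ with ‖σ‖² + x² + y² + z² ≤ r², setting Δ = √(Δ₀² + x² + y² + z²) and D = √(Δ² + y² + z²), one has υ_max ⟪σ, sat(Λσ)⟫ + U (k_ξ x²/√(1+x²) + y²/D + z²/D) ≥ k_r (‖σ‖² + x² + y² + z²), where k_r = min{ υ_max λ_min tanh(λ_max r)/(λ_max r), U k_ξ/√(1+r²), U/√(Δ₀² + 2r²) }. -/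

import Mathlib

open scoped RealInnerProductSpace Classical

/-- The smooth saturation function `sat(x) = (tanh ‖x‖ / ‖x‖) · x` (with `sat 0 = 0`). -/
noncomputable def sat {m : ℕ} (x : EuclideanSpace ℝ (Fin m)) : EuclideanSpace ℝ (Fin m) :=
  if x = 0 then 0 else (Real.tanh ‖x‖ / ‖x‖) • x

private lemma hasDerivAt_tanh' (t : ℝ) : HasDerivAt Real.tanh (1 / Real.cosh t ^ 2) t := by
  have h : HasDerivAt (fun y => Real.sinh y / Real.cosh y)
      ((Real.cosh t * Real.cosh t - Real.sinh t * Real.sinh t) / Real.cosh t ^ 2) t :=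
    (Real.hasDerivAt_sinh t).div (Real.hasDerivAt_cosh t) (Real.cosh_pos t).ne'
  have hfun : Real.tanh = fun y => Real.sinh y / Real.cosh y :=
    funext fun y => Real.tanh_eq_sinh_div_cosh y
  have h1 : Real.cosh t * Real.cosh t - Real.sinh t * Real.sinh t = 1 := by
    have := Real.cosh_sq_sub_sinh_sq t; nlinarith [this]
  rw [hfun]; rw [h1] at h; exact h

private lemma tanh_concaveOn : ConcaveOn ℝ (Set.Ici (0:ℝ)) Real.tanh := by
  apply AntitoneOn.concaveOn_of_deriv (convex_Ici 0)
  · exact fun t _ => (hasDerivAt_tanh' t).continuousAt.continuousWithinAt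
  · exact fun t _ => (hasDerivAt_tanh' t).differentiableAt.differentiableWithinAt
  · intro a ha b hb hab
    rw [interior_Ici] at ha hb
    rw [(hasDerivAt_tanh' a).deriv, (hasDerivAt_tanh' b).deriv]
    have h1 : Real.cosh a ≤ Real.cosh b := by
      rw [Real.cosh_le_cosh, abs_of_pos ha, abs_of_pos hb]; exact hab
    have h2 : (0:ℝ) < Real.cosh a ^ 2 := by positivity
    exact one_div_le_one_div_of_le h2 (pow_le_pow_left₀ (Real.cosh_pos a).le h1 2)

private lemma tanh_nonneg' {t : ℝ} (ht : 0 ≤ t) : 0 ≤ Real.tanh t := by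
  rw [Real.tanh_eq_sinh_div_cosh]
  exact div_nonneg (Real.sinh_nonneg_iff.mpr ht) (Real.cosh_pos t).le

private lemma tanh_div_antitone {a b : ℝ} (ha : 0 < a) (hab : a ≤ b) :
    Real.tanh b / b ≤ Real.tanh a / a := by
  have hb : 0 < b := lt_of_lt_of_le ha hab
  have hw1 : (0:ℝ) ≤ 1 - a / b := by
    have : a / b ≤ 1 := (div_le_one hb).mpr hab
    linarith
  have hw2 : (0:ℝ) ≤ a / b := by positivity
  have hcc := tanh_concaveOn.2 (Set.self_mem_Ici) (Set.mem_Ici.mpr hb.le) hw1 hw2 (by ring)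
  have hab' : (1 - a/b) • (0:ℝ) + (a/b) • b = a := by
    simp only [smul_eq_mul]; field_simp; ring
  rw [hab'] at hcc
  simp only [smul_eq_mul, Real.tanh_zero, mul_zero, zero_add] at hcc
  rw [div_le_div_iff₀ hb ha]
  have h := mul_le_mul_of_nonneg_right hcc hb.le
  have he : a / b * Real.tanh b * b = Real.tanh b * a := by field_simp
  linarith [he ▸ h]

private lemma spectral_bounds {m : ℕ} (Λ : Matrix (Fin m) (Fin m) ℝ) (hΛ : Λ.IsHermitian)
    {lmin lmax : ℝ} (hlo : ∀ i, lmin ≤ hΛ.eigenvalues i) (hhi : ∀ i, hΛ.eigenvalues i ≤ lmax)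
    (hpos : ∀ i, 0 ≤ hΛ.eigenvalues i) (hlmax : 0 ≤ lmax) (σ : EuclideanSpace ℝ (Fin m)) :
    lmin * ‖σ‖ ^ 2 ≤ ⟪σ, Matrix.toEuclideanLin Λ σ⟫ ∧
      ‖Matrix.toEuclideanLin Λ σ‖ ≤ lmax * ‖σ‖ := by
  classical
  set b := hΛ.eigenvectorBasis with hb
  set μ := hΛ.eigenvalues with hμ
  set v : EuclideanSpace ℝ (Fin m) := Matrix.toEuclideanLin Λ σ with hv
  have hsym : (Matrix.toEuclideanLin Λ).IsSymmetric :=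
    (Matrix.isHermitian_iff_isSymmetric).1 hΛ
  have hTv : Matrix.toEuclideanLin Λ σ = v := rfl
  have hrepr : ∀ i, b.repr v i = μ i * b.repr σ i := by
    intro i
    rw [b.repr_apply_apply, b.repr_apply_apply]
    have h2 : Matrix.toEuclideanLin Λ (b i) = μ i • b i := by
      apply WithLp.ofLp_injective 2; simp only [WithLp.ofLp_smul]; exact hΛ.mulVec_eigenvectorBasis i
    have h1 : ⟪(b i : EuclideanSpace ℝ (Fin m)), v⟫ = ⟪Matrix.toEuclideanLin Λ (b i), σ⟫ := by
      rw [← hTv, hsym (b i) σ]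
    rw [h1, h2, real_inner_smul_left]
  have hinner : ⟪σ, v⟫ = ∑ i, μ i * (b.repr σ i) ^ 2 := by
    rw [← b.repr.inner_map_map σ v]
    simp only [PiLp.inner_apply, RCLike.inner_apply, conj_trivial, hrepr]
    exact Finset.sum_congr rfl fun i _ => by ring
  have hnσ : ‖σ‖ ^ 2 = ∑ i, (b.repr σ i) ^ 2 := by
    rw [← real_inner_self_eq_norm_sq, ← b.repr.inner_map_map σ σ]
    simp only [PiLp.inner_apply, RCLike.inner_apply, conj_trivial]
    exact Finset.sum_congr rfl fun i _ => by ring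
  have hnv : ‖v‖ ^ 2 = ∑ i, (μ i * b.repr σ i) ^ 2 := by
    rw [← real_inner_self_eq_norm_sq, ← b.repr.inner_map_map v v]
    simp only [PiLp.inner_apply, RCLike.inner_apply, conj_trivial, hrepr]
    exact Finset.sum_congr rfl fun i _ => by ring
  constructor
  · rw [hinner, hnσ, Finset.mul_sum]
    exact Finset.sum_le_sum fun i _ =>
      mul_le_mul_of_nonneg_right (hlo i) (sq_nonneg _)
  · have hsq : ‖v‖ ^ 2 ≤ (lmax * ‖σ‖) ^ 2 := by
      rw [hnv, mul_pow, hnσ, Finset.mul_sum]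
      refine Finset.sum_le_sum fun i _ => ?_
      rw [mul_pow]
      have : μ i ^ 2 ≤ lmax ^ 2 := pow_le_pow_left₀ (hpos i) (hhi i) 2
      exact mul_le_mul_of_nonneg_right this (sq_nonneg _)
    have h := Real.sqrt_le_sqrt hsq
    rw [Real.sqrt_sq (norm_nonneg v),
      Real.sqrt_sq (mul_nonneg hlmax (norm_nonneg σ))] at h
    exact h

/-- **Key quantitative step of Theorem 1 (Lyapunov-derivative bound).** -/
theorem lyapunov_derivative_bound (m : ℕ) (hm : 1 ≤ m)
    (Δ₀ kξ r υmax U : ℝ)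
    (hΔ₀ : 0 < Δ₀) (hkξ : 0 < kξ) (hr : 0 < r) (hυmax : 0 < υmax) (hU : 0 < U)
    (Λ : Matrix (Fin m) (Fin m) ℝ) (hΛ : Λ.IsHermitian) (hPD : Λ.PosDef)
    (lmin lmax : ℝ)
    (hmin : IsLeast (Set.range hΛ.eigenvalues) lmin)
    (hmax : IsGreatest (Set.range hΛ.eigenvalues) lmax)
    (σ : EuclideanSpace ℝ (Fin m)) (x y z : ℝ)
    (hball : ‖σ‖ ^ 2 + x ^ 2 + y ^ 2 + z ^ 2 ≤ r ^ 2) :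
    let Δ : ℝ := Real.sqrt (Δ₀ ^ 2 + x ^ 2 + y ^ 2 + z ^ 2)
    let D : ℝ := Real.sqrt (Δ ^ 2 + y ^ 2 + z ^ 2)
    let kr : ℝ := min (υmax * lmin * (Real.tanh (lmax * r) / (lmax * r)))
      (min (U * kξ / Real.sqrt (1 + r ^ 2)) (U / Real.sqrt (Δ₀ ^ 2 + 2 * r ^ 2)))
    υmax * ⟪σ, sat (WithLp.toLp 2 (Λ.mulVec σ) : EuclideanSpace ℝ (Fin m))⟫ +
        U * (kξ * x ^ 2 / Real.sqrt (1 + x ^ 2) + y ^ 2 / D + z ^ 2 / D) ≥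
      kr * (‖σ‖ ^ 2 + x ^ 2 + y ^ 2 + z ^ 2) := by
  intro Δ D kr
  set v : EuclideanSpace ℝ (Fin m) := Matrix.toEuclideanLin Λ σ with hv
  have hveq : (WithLp.toLp 2 (Λ.mulVec σ) : EuclideanSpace ℝ (Fin m)) = v := rfl
  rw [hveq]
  have hlo : ∀ i, lmin ≤ hΛ.eigenvalues i := fun i => hmin.2 (Set.mem_range_self i)
  have hhi : ∀ i, hΛ.eigenvalues i ≤ lmax := fun i => hmax.2 (Set.mem_range_self i)
  have hpos : ∀ i, 0 ≤ hΛ.eigenvalues i := fun i => (hPD.eigenvalues_pos i).le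
  have hlminpos : 0 < lmin := by
    obtain ⟨i0, hi0⟩ := hmin.1
    rw [← hi0]; exact hPD.eigenvalues_pos i0
  have hlmaxpos : 0 < lmax := by
    obtain ⟨i0, hi0⟩ := hmax.1
    rw [← hi0]; exact hPD.eigenvalues_pos i0
  obtain ⟨hsb1, hsb2⟩ := spectral_bounds Λ hΛ hlo hhi hpos hlmaxpos.le σ
  have hσ2 : ‖σ‖ ^ 2 ≤ r ^ 2 := by nlinarith [sq_nonneg x, sq_nonneg y, sq_nonneg z]
  have hσr : ‖σ‖ ≤ r := by nlinarith [norm_nonneg σ, sq_nonneg (‖σ‖ + r)]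
  have hx2 : x ^ 2 ≤ r ^ 2 := by nlinarith [sq_nonneg ‖σ‖, sq_nonneg y, sq_nonneg z]
  -- term 1
  have hb0 : 0 < lmax * r := mul_pos hlmaxpos hr
  have htb0 : 0 ≤ Real.tanh (lmax * r) / (lmax * r) := div_nonneg (tanh_nonneg' hb0.le) hb0.le
  have hterm1 : kr * ‖σ‖ ^ 2 ≤ υmax * ⟪σ, sat v⟫ := by
    have hkrA : kr ≤ υmax * lmin * (Real.tanh (lmax * r) / (lmax * r)) := min_le_left _ _
    by_cases hσ0 : σ = 0
    · simp [hσ0, sat, hv, inner_zero_left]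
    · have hσn : 0 < ‖σ‖ := norm_pos_iff.mpr hσ0
      have hinpos : 0 < ⟪σ, v⟫ := lt_of_lt_of_le (by positivity) hsb1
      have hv0 : v ≠ 0 := by
        intro h
        rw [h, inner_zero_right] at hinpos
        exact lt_irrefl 0 hinpos
      have hvn : 0 < ‖v‖ := norm_pos_iff.mpr hv0
      have hvb : ‖v‖ ≤ lmax * r :=
        le_trans hsb2 (mul_le_mul_of_nonneg_left hσr hlmaxpos.le)
      have htr : Real.tanh (lmax * r) / (lmax * r) ≤ Real.tanh ‖v‖ / ‖v‖ :=
        tanh_div_antitone hvn hvb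
      have hsat : ⟪σ, sat v⟫ = (Real.tanh ‖v‖ / ‖v‖) * ⟪σ, v⟫ := by
        rw [sat, if_neg hv0, real_inner_smul_right]
      have hstep : (Real.tanh (lmax * r) / (lmax * r)) * (lmin * ‖σ‖ ^ 2)
          ≤ (Real.tanh ‖v‖ / ‖v‖) * ⟪σ, v⟫ :=
        mul_le_mul htr hsb1 (by positivity) (htb0.trans htr)
      calc kr * ‖σ‖ ^ 2
          ≤ (υmax * lmin * (Real.tanh (lmax * r) / (lmax * r))) * ‖σ‖ ^ 2 :=
            mul_le_mul_of_nonneg_right hkrA (sq_nonneg _)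
        _ = υmax * ((Real.tanh (lmax * r) / (lmax * r)) * (lmin * ‖σ‖ ^ 2)) := by ring
        _ ≤ υmax * ((Real.tanh ‖v‖ / ‖v‖) * ⟪σ, v⟫) :=
            mul_le_mul_of_nonneg_left hstep hυmax.le
        _ = υmax * ⟪σ, sat v⟫ := by rw [hsat]
  -- term 2
  have hterm2 : kr * x ^ 2 ≤ U * (kξ * x ^ 2 / Real.sqrt (1 + x ^ 2)) := by
    have hkr2 : kr ≤ U * kξ / Real.sqrt (1 + r ^ 2) :=
      le_trans (min_le_right _ _) (min_le_left _ _)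
    have hs1 : (0:ℝ) < Real.sqrt (1 + x ^ 2) := Real.sqrt_pos.mpr (by positivity)
    have hs2 : Real.sqrt (1 + x ^ 2) ≤ Real.sqrt (1 + r ^ 2) :=
      Real.sqrt_le_sqrt (by linarith)
    calc kr * x ^ 2 ≤ (U * kξ / Real.sqrt (1 + r ^ 2)) * x ^ 2 :=
          mul_le_mul_of_nonneg_right hkr2 (sq_nonneg x)
      _ = U * kξ * x ^ 2 / Real.sqrt (1 + r ^ 2) := by ring
      _ ≤ U * kξ * x ^ 2 / Real.sqrt (1 + x ^ 2) := by gcongr <;> positivity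
      _ = U * (kξ * x ^ 2 / Real.sqrt (1 + x ^ 2)) := by ring
  -- term 3
  have hΔsq : Δ ^ 2 = Δ₀ ^ 2 + x ^ 2 + y ^ 2 + z ^ 2 := Real.sq_sqrt (by positivity)
  have hΔ₀sq : 0 < Δ₀ ^ 2 := pow_pos hΔ₀ 2
  have hDpos : 0 < D := Real.sqrt_pos.mpr (by
    rw [hΔsq]; linarith [sq_nonneg x, sq_nonneg y, sq_nonneg z])
  have hDle : D ≤ Real.sqrt (Δ₀ ^ 2 + 2 * r ^ 2) := Real.sqrt_le_sqrt (by
    rw [hΔsq]; linarith [sq_nonneg ‖σ‖, sq_nonneg x])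
  have hterm3 : kr * (y ^ 2 + z ^ 2) ≤ U * (y ^ 2 / D + z ^ 2 / D) := by
    have hkr3 : kr ≤ U / Real.sqrt (Δ₀ ^ 2 + 2 * r ^ 2) :=
      le_trans (min_le_right _ _) (min_le_right _ _)
    have h3 : U * (y ^ 2 / D + z ^ 2 / D) = U * (y ^ 2 + z ^ 2) / D := by ring
    rw [h3]
    calc kr * (y ^ 2 + z ^ 2) ≤ (U / Real.sqrt (Δ₀ ^ 2 + 2 * r ^ 2)) * (y ^ 2 + z ^ 2) :=
          mul_le_mul_of_nonneg_right hkr3 (by positivity)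
      _ = U * (y ^ 2 + z ^ 2) / Real.sqrt (Δ₀ ^ 2 + 2 * r ^ 2) := by ring
      _ ≤ U * (y ^ 2 + z ^ 2) / D := by gcongr <;> positivity
  -- combine
  rw [ge_iff_le]
  have hgoal : kr * (‖σ‖ ^ 2 + x ^ 2 + y ^ 2 + z ^ 2)
      = kr * ‖σ‖ ^ 2 + kr * x ^ 2 + kr * (y ^ 2 + z ^ 2) := by ring
  have hU3 : U * (kξ * x ^ 2 / Real.sqrt (1 + x ^ 2) + y ^ 2 / D + z ^ 2 / D)
      = U * (kξ * x ^ 2 / Real.sqrt (1 + x ^ 2)) + U * (y ^ 2 / D + z ^ 2 / D) := by ring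
  rw [hgoal, hU3]
  linarith [hterm1, hterm2, hterm3]
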